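/- Let m ≥ 3 and n ≥ 1. The sparing number of the prism C_m × P_n (the cartesian product of the cycle C_m and the path P_n) is 0 if m is even, and 2n+1 if m is odd. -/

import Mathlib

open Finset SimpleGraph
open scoped Pointwise

/-- `f` is a weak integer additive set-indexer (weak IASI) of the simple graph `G`:
an injective assignment of nonempty finite sets of non-negative integers to vertices
whose induced sumset-labeling of edges is injective, and such that the set-indexing
number of every edge equals the maximum of those of its end vertices. -/
structure IsWeakIASI {V : Type*} (G : SimpleGraph V) (f : V → Finset ℕ) : Prop where
  nonempty : ∀ v : V, (f v).Nonempty
  injective : Function.Injective f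
  edgeInjective : ∀ ⦃u v x y : V⦄, G.Adj u v → G.Adj x y →
    f u + f v = f x + f y → s(u, v) = s(x, y)
  weak : ∀ ⦃u v : V⦄, G.Adj u v → (f u + f v).card = max (f u).card (f v).card

open scoped Classical in
/-- The number of mono-indexed edges of `G` under the vertex labeling `f`, i.e. the
number of edges both of whose end vertices receive singleton set-labels. -/
noncomputable def monoEdgeCount {V : Type*} [Fintype V] (G : SimpleGraph V)
    (f : V → Finset ℕ) : ℕ :=
  (G.edgeFinset.filter fun e => ∀ v ∈ e, (f v).card = 1).card

/-- The set of numbers of mono-indexed edges over all weak IASIs of `G`; the sparing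
number of `G` is the least element of this set. -/
noncomputable def monoCounts {V : Type*} [Fintype V] (G : SimpleGraph V) : Set ℕ :=
  {k : ℕ | ∃ f : V → Finset ℕ, IsWeakIASI G f ∧ monoEdgeCount G f = k}

-- auxiliary lemmas

example (a b : ℕ) : ({a} : Finset ℕ) + {b} = {a + b} := Finset.singleton_add_singleton a b

lemma pair_add_single (a b : ℕ) : ({a, a+1} : Finset ℕ) + {b} = {a+b, a+b+1} := by
  ext x
  simp only [Finset.mem_add, Finset.mem_insert, Finset.mem_singleton]
  constructor
  · rintro ⟨y, hy, z, rfl, rfl⟩; omega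
  · rintro (rfl | rfl)
    exacts [⟨a, Or.inl rfl, b, rfl, rfl⟩, ⟨a+1, Or.inr rfl, b, rfl, by omega⟩]

lemma pair_eq_pair_iff {a b : ℕ} : ({a, a+1} : Finset ℕ) = {b, b+1} ↔ a = b := by
  constructor
  · intro h
    have ha : a = b ∨ a = b + 1 := by
      have : a ∈ ({b, b+1} : Finset ℕ) := h ▸ (by simp)
      simpa using this
    have hb : b = a ∨ b = a + 1 := by
      have : b ∈ ({a, a+1} : Finset ℕ) := h.symm ▸ (by simp)
      simpa using this
    omega
  · rintro rfl; rfl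

lemma card_pair_succ (a : ℕ) : ({a, a+1} : Finset ℕ).card = 2 := by
  rw [Finset.card_insert_of_notMem (by simp)]
  rfl

-- pow lemma
lemma pow_two_add_inj {a b c d : ℕ} (hab : a ≠ b) (hcd : c ≠ d)
    (h : 2^a + 2^b = 2^c + 2^d) : (a = c ∧ b = d) ∨ (a = d ∧ b = c) := by
  have key : ∀ a b c d : ℕ, a < b → c < d → 2^a + 2^b = 2^c + 2^d → a = c ∧ b = d := by
    intro a b c d hab hcd h
    have hle : ∀ x y z w : ℕ, x < y → z < w → 2^x + 2^y = 2^z + 2^w → y ≤ w := by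
      intro x y z w hxy hzw h
      have h1 : 2^y < 2^(w+1) := by
        have : 2^z < 2^w := Nat.pow_lt_pow_right one_lt_two hzw
        calc 2^y ≤ 2^x + 2^y := Nat.le_add_left _ _
          _ = 2^z + 2^w := h
          _ < 2^w + 2^w := by omega
          _ = 2^(w+1) := by ring
      exact Nat.lt_succ_iff.mp ((Nat.pow_lt_pow_iff_right one_lt_two).mp h1)
    have hbd : b = d := le_antisymm (hle _ _ _ _ hab hcd h) (hle _ _ _ _ hcd hab h.symm)
    subst hbd
    have : 2^a = 2^c := by omega
    exact ⟨Nat.pow_right_injective (le_refl 2) this, rfl⟩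
  rcases lt_or_gt_of_ne hab with h1 | h1 <;> rcases lt_or_gt_of_ne hcd with h2 | h2
  · exact Or.inl (key _ _ _ _ h1 h2 h)
  · exact Or.inr ⟨(key _ _ _ _ h1 h2 (by omega)).1, (key _ _ _ _ h1 h2 (by omega)).2⟩
  · exact Or.inr ⟨(key _ _ _ _ h1 h2 (by omega)).2, (key _ _ _ _ h1 h2 (by omega)).1⟩
  · exact Or.inl ⟨(key _ _ _ _ h1 h2 (by omega)).2, (key _ _ _ _ h1 h2 (by omega)).1⟩


lemma cycle_adj_iff {k : ℕ} {u v : Fin (k+3)} :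
    (cycleGraph (k+3)).Adj u v ↔ u = v + 1 ∨ v = u + 1 := by
  rw [show (cycleGraph (k+3)).Adj u v ↔ u - v = 1 ∨ v - u = 1 from cycleGraph_adj (n := k+1)]
  constructor
  · rintro (h | h)
    · exact Or.inl (by rw [← h]; abel)
    · exact Or.inr (by rw [← h]; abel)
  · rintro (rfl | rfl)
    · exact Or.inl (by abel)
    · exact Or.inr (by abel)

lemma succ_val_cases {k : ℕ} (v : Fin (k+3)) :
    ((v+1).val = v.val + 1 ∧ v.val < k+2) ∨ ((v+1).val = 0 ∧ v.val = k+2) := by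
  have h := Fin.val_add_one (n := k+2) v
  by_cases hv : v = Fin.last (k+2)
  · right; rw [h, if_pos hv]; exact ⟨rfl, by rw [hv]; rfl⟩
  · left
    rw [h, if_neg hv]
    refine ⟨rfl, ?_⟩
    have := v.isLt
    have hne : v.val ≠ k + 2 := fun hh => hv (Fin.ext hh)
    omega

-- encoding
def enc {k n : ℕ} (v : Fin (k+3) × Fin (n+1)) : ℕ := v.1.val + (k+3) * v.2.val

lemma enc_inj {k n : ℕ} : Function.Injective (enc (k := k) (n := n)) := by
  rintro ⟨a, b⟩ ⟨c, d⟩ h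
  simp only [enc] at h
  have ha := a.isLt; have hc := c.isLt
  have h1 : a.val = c.val := by
    have e1 : (a.val + (k+3) * b.val) % (k+3) = a.val := by
      rw [Nat.add_mul_mod_self_left, Nat.mod_eq_of_lt ha]
    have e2 : (c.val + (k+3) * d.val) % (k+3) = c.val := by
      rw [Nat.add_mul_mod_self_left, Nat.mod_eq_of_lt hc]
    rw [← e1, ← e2, h]
  have h2 : b.val = d.val := by
    have : (k+3) * b.val = (k+3) * d.val := by omega
    exact Nat.eq_of_mul_eq_mul_left (by omega) this
  exact Prod.ext (Fin.ext h1) (Fin.ext h2)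

section Lab
variable {k n : ℕ} (B : Fin (k+3) × Fin (n+1) → Prop) [DecidablePred B]

def lab (v : Fin (k+3) × Fin (n+1)) : Finset ℕ :=
  if B v then {2 ^ enc v, 2 ^ enc v + 1} else {2 ^ enc v}

lemma card_lab_of (v) (h : B v) : (lab B v).card = 2 := by
  rw [lab, if_pos h]; exact card_pair_succ _

lemma card_lab_of_not (v) (h : ¬ B v) : (lab B v).card = 1 := by
  rw [lab, if_neg h]; rfl

lemma card_lab_eq_one_iff (v) : (lab B v).card = 1 ↔ ¬ B v := by
  by_cases h : B v
  · simp [card_lab_of B v h, h]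
  · simp [card_lab_of_not B v h, h]

lemma lab_add_lab {u v : Fin (k+3) × Fin (n+1)} (h : ¬ (B u ∧ B v)) :
    lab B u + lab B v =
      if B u ∨ B v then {2^enc u + 2^enc v, 2^enc u + 2^enc v + 1}
      else {2^enc u + 2^enc v} := by
  by_cases hu : B u <;> by_cases hv : B v
  · exact absurd ⟨hu, hv⟩ h
  · rw [lab, lab, if_pos hu, if_neg hv, if_pos (Or.inl hu), pair_add_single]
  · rw [lab, lab, if_pos hv, if_neg hu, if_pos (Or.inr hv), add_comm, pair_add_single,
      add_comm (2 ^ enc v)]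
  · rw [lab, lab, if_neg hu, if_neg hv, if_neg (by tauto), Finset.singleton_add_singleton]

lemma isWeakIASI_lab {G : SimpleGraph (Fin (k+3) × Fin (n+1))}
    (hind : ∀ u v, G.Adj u v → ¬ (B u ∧ B v)) :
    IsWeakIASI G (lab B) := by
  have pow_ne : ∀ u v : Fin (k+3) × Fin (n+1), u ≠ v → enc u ≠ enc v :=
    fun u v h h' => h (enc_inj h')
  constructor
  · intro v
    rw [lab]
    split <;> simp
  · rintro u v h
    rw [lab, lab] at h
    by_cases hu : B u <;> by_cases hv : B v
    · rw [if_pos hu, if_pos hv] at h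
      exact enc_inj (Nat.pow_right_injective le_rfl (pair_eq_pair_iff.mp h))
    · rw [if_pos hu, if_neg hv] at h
      exact absurd (congrArg Finset.card h) (by rw [card_pair_succ]; simp)
    · rw [if_neg hu, if_pos hv] at h
      exact absurd (congrArg Finset.card h) (by rw [card_pair_succ]; simp)
    · rw [if_neg hu, if_neg hv] at h
      exact enc_inj (Nat.pow_right_injective le_rfl (Finset.singleton_inj.mp h))
  · intro u v x y huv hxy h
    rw [lab_add_lab B (hind u v huv), lab_add_lab B (hind x y hxy)] at h
    have hS : 2^enc u + 2^enc v = 2^enc x + 2^enc y := by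
      split_ifs at h with h1 h2 h2
      · exact pair_eq_pair_iff.mp h
      · exact absurd (congrArg Finset.card h) (by rw [card_pair_succ]; simp)
      · exact absurd (congrArg Finset.card h) (by rw [card_pair_succ]; simp)
      · exact Finset.singleton_injective h
    have := pow_two_add_inj (pow_ne u v huv.ne) (pow_ne x y hxy.ne) hS
    rcases this with ⟨h1, h2⟩ | ⟨h1, h2⟩
    · rw [enc_inj h1, enc_inj h2]
    · rw [enc_inj h1, enc_inj h2, Sym2.eq_swap]
  · intro u v huv
    rw [lab_add_lab B (hind u v huv)]
    by_cases hu : B u <;> by_cases hv : B v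
    · exact absurd ⟨hu, hv⟩ (hind u v huv)
    · rw [if_pos (Or.inl hu), card_pair_succ, card_lab_of B u hu, card_lab_of_not B v hv]
      simp
    · rw [if_pos (Or.inr hv), card_pair_succ, card_lab_of_not B u hu, card_lab_of B v hv]
      simp
    · rw [if_neg (by tauto), card_lab_of_not B u hu, card_lab_of_not B v hv]
      simp

end Lab


-- succ val as an if

lemma succ_val_eq {k : ℕ} (x : Fin (k+3)) :
    (x + 1).val = if x.val = k+2 then 0 else x.val + 1 := by
  rcases succ_val_cases x with ⟨h1, h2⟩ | ⟨h1, h2⟩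
  · rw [h1, if_neg (by omega)]
  · rw [h1, if_pos h2]

section Even
variable {k n : ℕ}

def Beven (k n : ℕ) (v : Fin (k+3) × Fin (n+1)) : Prop := (v.1.val + v.2.val) % 2 = 1

instance : DecidablePred (Beven k n) := fun v => by unfold Beven; infer_instance

lemma parity_ne (hk : (k+3) % 2 = 0) {u v : Fin (k+3) × Fin (n+1)}
    (h : (cycleGraph (k+3) □ pathGraph (n+1)).Adj u v) :
    (u.1.val + u.2.val) % 2 ≠ (v.1.val + v.2.val) % 2 := by
  rw [boxProd_adj] at h
  rcases h with ⟨hc, h2⟩ | ⟨hp, h1⟩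
  · rw [cycle_adj_iff] at hc
    rw [h2]
    rcases hc with h | h
    · have h3 := succ_val_eq v.1
      have h4 : u.1.val = (v.1 + 1).val := congrArg Fin.val h
      have := v.1.isLt
      split_ifs at h3 <;> omega
    · have h3 := succ_val_eq u.1
      have h4 : v.1.val = (u.1 + 1).val := congrArg Fin.val h
      have := u.1.isLt
      split_ifs at h3 <;> omega
  · rw [pathGraph_adj] at hp
    rw [h1]
    omega

lemma even_hind (hk : (k+3) % 2 = 0) :
    ∀ u v, (cycleGraph (k+3) □ pathGraph (n+1)).Adj u v → ¬ (Beven k n u ∧ Beven k n v) := by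
  rintro u v h ⟨hu, hv⟩
  exact parity_ne hk h (by unfold Beven at hu hv; omega)

set_option maxHeartbeats 1000000 in
lemma monoEdgeCount_even_zero (hk : (k+3) % 2 = 0) :
    monoEdgeCount (cycleGraph (k+3) □ pathGraph (n+1)) (lab (Beven k n)) = 0 := by
  simp only [monoEdgeCount, Finset.card_eq_zero, Finset.filter_eq_empty_iff,
    mem_edgeFinset, mem_edgeSet]
  intro e he
  induction e using Sym2.ind with
  | _ u v =>
    intro hall
    have hu := (card_lab_eq_one_iff _ u).mp (hall u (Sym2.mem_mk_left u v))
    have hv := (card_lab_eq_one_iff _ v).mp (hall v (Sym2.mem_mk_right u v))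
    unfold Beven at hu hv
    refine parity_ne hk he ?_
    obtain ⟨u1, u2⟩ := u
    obtain ⟨v1, v2⟩ := v
    dsimp only at hu hv ⊢
    omega

end Even

-- generic counting helpers (avoid instance clashes by stating membership abstractly)
lemma card_eq_of_equiv {α β : Type*} [Fintype β] (t : Finset α) (p : α → Prop) (w : β → α)
    (ht : ∀ a, a ∈ t ↔ p a) (hinj : Function.Injective w)
    (hmem : ∀ b, p (w b)) (hcov : ∀ a, p a → ∃ b, a = w b) :
    t.card = Fintype.card β := by
  rw [← Finset.card_univ (α := β)]
  refine (Finset.card_bij (fun b _ => w b) ?_ ?_ ?_).symm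
  · intro b _
    exact (ht (w b)).mpr (hmem b)
  · intro b₁ _ b₂ _ h
    exact hinj h
  · intro a ha
    obtain ⟨b, rfl⟩ := hcov a ((ht a).mp ha)
    exact ⟨b, Finset.mem_univ b, rfl⟩

lemma le_card_of_inj {α β : Type*} [Fintype β] (t : Finset α) (p : α → Prop) (w : β → α)
    (ht : ∀ a, a ∈ t ↔ p a) (hinj : Function.Injective w) (hmem : ∀ b, p (w b)) :
    Fintype.card β ≤ t.card := by
  rw [← Finset.card_univ (α := β)]
  exact Finset.card_le_card_of_injOn w (fun b _ => (ht (w b)).mpr (hmem b)) hinj.injOn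

-- the shadowMap map on layer data
def shadowMap (n : ℕ) : Fin (n+1) ⊕ Fin n → Sym2 (Fin (n+1)) :=
  Sum.elim (fun j => s(j, j)) (fun j => s(j.castSucc, j.succ))

lemma shadow_inj {n : ℕ} : Function.Injective (shadowMap n) := by
  have val2 : ∀ (a b : Fin (n+1)), s(a, a) = s(b, b) → a = b := by
    intro a b h
    rw [Sym2.eq_iff] at h
    tauto
  rintro (a | a) (b | b) h <;>
    simp only [shadowMap, Sum.elim_inl, Sum.elim_inr, Sym2.eq_iff] at h
  · rcases h with ⟨h, _⟩ | ⟨h, _⟩ <;> rw [h]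
  · exfalso
    rcases h with ⟨h1, h2⟩ | ⟨h1, h2⟩ <;>
    · have e1 := congrArg Fin.val h1
      have e2 := congrArg Fin.val h2
      simp only [Fin.coe_castSucc, Fin.val_succ] at e1 e2
      omega
  · exfalso
    rcases h with ⟨h1, h2⟩ | ⟨h1, h2⟩ <;>
    · have e1 := congrArg Fin.val h1
      have e2 := congrArg Fin.val h2
      simp only [Fin.coe_castSucc, Fin.val_succ] at e1 e2
      omega
  · rcases h with ⟨h1, h2⟩ | ⟨h1, h2⟩
    · have e1 := congrArg Fin.val h1
      simp only [Fin.coe_castSucc] at e1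
      rw [congrArg Sum.inr (Fin.ext e1 : a = b)]
    · exfalso
      have e1 := congrArg Fin.val h1
      have e2 := congrArg Fin.val h2
      simp only [Fin.coe_castSucc, Fin.val_succ] at e1 e2
      omega

def col0 (k : ℕ) : Fin (k+3) := ⟨0, by omega⟩
def colPre (k : ℕ) : Fin (k+3) := ⟨k+1, by omega⟩
def colLast (k : ℕ) : Fin (k+3) := ⟨k+2, by omega⟩

@[simp] lemma col0_val (k : ℕ) : (col0 k).val = 0 := rfl
@[simp] lemma colPre_val (k : ℕ) : (colPre k).val = k+1 := rfl
@[simp] lemma colLast_val (k : ℕ) : (colLast k).val = k+2 := rfl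

section Odd
variable {k n : ℕ}

def Bodd (k n : ℕ) (v : Fin (k+3) × Fin (n+1)) : Prop :=
  if v.2.val % 2 = 0 then v.1.val % 2 = 1 else v.1.val % 2 = 0 ∧ v.1.val ≠ k + 2

instance : DecidablePred (Bodd k n) := fun v => by unfold Bodd; infer_instance

lemma bodd_iff (v : Fin (k+3) × Fin (n+1)) :
    Bodd k n v ↔ ((v.2.val % 2 = 0 ∧ v.1.val % 2 = 1) ∨
      (v.2.val % 2 = 1 ∧ v.1.val % 2 = 0 ∧ v.1.val ≠ k + 2)) := by
  unfold Bodd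
  split_ifs with h <;> constructor <;> intro h2 <;> omega

lemma odd_hind : ∀ u v, (cycleGraph (k+3) □ pathGraph (n+1)).Adj u v →
    ¬ (Bodd k n u ∧ Bodd k n v) := by
  rintro ⟨u1, u2⟩ ⟨v1, v2⟩ h ⟨hu, hv⟩
  rw [boxProd_adj] at h
  rw [bodd_iff] at hu hv
  dsimp only at hu hv
  rcases h with ⟨hc, h2⟩ | ⟨hp, h1⟩
  · dsimp only at hc h2
    have h2' : u2.val = v2.val := congrArg Fin.val h2
    rw [cycle_adj_iff] at hc
    rcases hc with hcc | hcc
    · have h3 := succ_val_eq v1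
      have h4 : u1.val = (v1 + 1).val := congrArg Fin.val hcc
      have := v1.isLt
      split_ifs at h3 <;> omega
    · have h3 := succ_val_eq u1
      have h4 : v1.val = (u1 + 1).val := congrArg Fin.val hcc
      have := u1.isLt
      split_ifs at h3 <;> omega
  · dsimp only at hp h1
    rw [pathGraph_adj] at hp
    have h1' : u1.val = v1.val := congrArg Fin.val h1
    omega

def wit (k n : ℕ) : Fin (n+1) ⊕ Fin n → Sym2 (Fin (k+3) × Fin (n+1))
  | .inl j =>
      if j.val % 2 = 0 then s((colLast k, j), (col0 k, j))
      else s((colPre k, j), (colLast k, j))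
  | .inr j => s((colLast k, j.castSucc), (colLast k, j.succ))

lemma shadow_wit (x : Fin (n+1) ⊕ Fin n) :
    Sym2.map Prod.snd (wit k n x) = shadowMap n x := by
  rcases x with j | j
  · show Sym2.map Prod.snd (if j.val % 2 = 0 then _ else _) = _
    split_ifs <;> simp [shadowMap, Sym2.map_pair_eq]
  · simp [wit, shadowMap, Sym2.map_pair_eq]

lemma wit_inj : Function.Injective (wit k n) := by
  intro x y h
  apply shadow_inj
  rw [← shadow_wit, ← shadow_wit, h]

-- small-small cycle pair in a layer must be the witness edge
lemma cyc_pair (j : Fin (n+1)) (a : Fin (k+3))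
    (ha : ¬ Bodd k n (a, j)) (hb : ¬ Bodd k n (a + 1, j)) :
    s((a, j), (a + 1, j)) = wit k n (Sum.inl j) := by
  rw [bodd_iff] at ha hb
  dsimp only at ha hb
  have h3 := succ_val_eq a
  have ha' := a.isLt
  show _ = if j.val % 2 = 0 then _ else _
  by_cases hj : j.val % 2 = 0
  · rw [if_pos hj]
    have hval : a.val = k + 2 := by split_ifs at h3 <;> omega
    have e1 : a = colLast k := Fin.ext hval
    subst e1
    have e2 : colLast k + 1 = col0 k := by
      apply Fin.ext
      rw [succ_val_eq]
      simp
    rw [e2]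
  · rw [if_neg hj]
    have hval : a.val = k + 1 := by split_ifs at h3 <;> omega
    have e1 : a = colPre k := Fin.ext hval
    subst e1
    have e2 : colPre k + 1 = colLast k := by
      apply Fin.ext
      rw [succ_val_eq]
      simp
    rw [e2]

-- small-small path pair must be the witness edge
lemma path_pair (i : Fin (k+3)) (a b : Fin (n+1)) (hab : a.val + 1 = b.val)
    (ha : ¬ Bodd k n (i, a)) (hb : ¬ Bodd k n (i, b)) :
    ∃ x, s((i, a), (i, b)) = wit k n x := by
  rw [bodd_iff] at ha hb
  dsimp only at ha hb
  have hval : i.val = k + 2 := by omega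
  have hlt : a.val < n := by have := b.isLt; omega
  refine ⟨Sum.inr ⟨a.val, hlt⟩, ?_⟩
  show _ = s((_, Fin.castSucc _), (_, Fin.succ _))
  have e0 : i = colLast k := Fin.ext hval
  have e1 : a = Fin.castSucc ⟨a.val, hlt⟩ := Fin.ext rfl
  have e2 : b = Fin.succ ⟨a.val, hlt⟩ := Fin.ext (by rw [Fin.val_succ]; exact hab.symm)
  rw [e0, ← e1, ← e2]

lemma monoEdgeCount_odd (hk : k % 2 = 0) :
    monoEdgeCount (cycleGraph (k+3) □ pathGraph (n+1)) (lab (Bodd k n)) = 2 * n + 1 := by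
  simp only [monoEdgeCount]
  refine Eq.trans (card_eq_of_equiv _
    (fun e => e ∈ (cycleGraph (k+3) □ pathGraph (n+1)).edgeSet ∧
      ∀ v ∈ e, (lab (Bodd k n) v).card = 1) (wit k n)
    (fun a => by simp only [Finset.mem_filter, mem_edgeFinset]) wit_inj ?_ ?_) ?_
  · -- membership: each witness is a mono edge
    rintro (j | j)
    · by_cases hj : j.val % 2 = 0
      · have hwit : wit k n (Sum.inl j) =
            s((colLast k, j), (col0 k, j)) := by
          show (if j.val % 2 = 0 then _ else _) = _
          rw [if_pos hj]
        rw [hwit]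
        have hadj : (cycleGraph (k+3) □ pathGraph (n+1)).Adj
            (colLast k, j) (col0 k, j) := by
          rw [boxProd_adj]
          refine Or.inl ⟨?_, rfl⟩
          rw [cycle_adj_iff]
          refine Or.inr (Fin.ext ?_)
          rw [succ_val_eq]
          simp
        refine ⟨(mem_edgeSet _).mpr hadj, ?_⟩
        intro w hw
        rw [Sym2.mem_iff] at hw
        rcases hw with rfl | rfl <;> rw [card_lab_eq_one_iff, bodd_iff] <;>
          simp only [col0_val, colPre_val, colLast_val, Fin.val_mk] <;> omega
      · have hwit : wit k n (Sum.inl j) =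
            s((colPre k, j), (colLast k, j)) := by
          show (if j.val % 2 = 0 then _ else _) = _
          rw [if_neg hj]
        rw [hwit]
        have hadj : (cycleGraph (k+3) □ pathGraph (n+1)).Adj
            (colPre k, j) (colLast k, j) := by
          rw [boxProd_adj]
          refine Or.inl ⟨?_, rfl⟩
          rw [cycle_adj_iff]
          refine Or.inr (Fin.ext ?_)
          rw [succ_val_eq]
          rw [if_neg (by simp)]
          simp
        refine ⟨(mem_edgeSet _).mpr hadj, ?_⟩
        intro w hw
        rw [Sym2.mem_iff] at hw
        rcases hw with rfl | rfl <;> rw [card_lab_eq_one_iff, bodd_iff] <;>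
          simp only [col0_val, colPre_val, colLast_val, Fin.val_mk] <;> omega
    · have hadj : (cycleGraph (k+3) □ pathGraph (n+1)).Adj
          (colLast k, j.castSucc) (colLast k, j.succ) := by
        rw [boxProd_adj]
        refine Or.inr ⟨?_, rfl⟩
        rw [pathGraph_adj]
        exact Or.inl (by rw [Fin.coe_castSucc, Fin.val_succ])
      refine ⟨(mem_edgeSet _).mpr hadj, ?_⟩
      intro w hw
      have hwit : wit k n (Sum.inr j) = s((colLast k, j.castSucc), (colLast k, j.succ)) := rfl
      rw [hwit, Sym2.mem_iff] at hw
      have hcs := Fin.coe_castSucc j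
      have hsc := Fin.val_succ j
      rcases hw with rfl | rfl <;> rw [card_lab_eq_one_iff, bodd_iff] <;>
        simp only [col0_val, colPre_val, colLast_val, Fin.coe_castSucc, Fin.val_succ] <;> omega
  · -- coverage: every mono edge is a witness
    rintro e ⟨he, hsmall⟩
    induction e using Sym2.ind with
    | _ u v =>
      rw [mem_edgeSet] at he
      have hu : ¬ Bodd k n u := by
        rw [← card_lab_eq_one_iff]
        exact hsmall u (Sym2.mem_mk_left u v)
      have hv : ¬ Bodd k n v := by
        rw [← card_lab_eq_one_iff]
        exact hsmall v (Sym2.mem_mk_right u v)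
      obtain ⟨u1, u2⟩ := u
      obtain ⟨v1, v2⟩ := v
      rw [boxProd_adj] at he
      rcases he with ⟨hc, h2⟩ | ⟨hp, h1⟩
      · dsimp only at hc h2
        subst h2
        rw [cycle_adj_iff] at hc
        rcases hc with hcc | hcc
        · subst hcc
          exact ⟨Sum.inl u2, by rw [Sym2.eq_swap]; exact cyc_pair u2 v1 hv hu⟩
        · subst hcc
          exact ⟨Sum.inl u2, cyc_pair u2 u1 hu hv⟩
      · dsimp only at hp h1
        subst h1
        rw [pathGraph_adj] at hp
        rcases hp with hpp | hpp
        · exact path_pair u1 u2 v2 hpp hu hv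
        · obtain ⟨x, hx⟩ := path_pair u1 v2 u2 hpp hv hu
          exact ⟨x, by rw [Sym2.eq_swap]; exact hx⟩
  · simp only [Fintype.card_sum, Fintype.card_fin]
    omega

end Odd

-- sumset cardinality lower bound
lemma sumset_card_lb {A C : Finset ℕ} (hA : A.Nonempty) (hC : C.Nonempty) :
    A.card + C.card ≤ (A + C).card + 1 := by
  set a0 := A.max' hA with ha0
  set c0 := C.min' hC with hc0
  have hU : A.image (· + c0) ⊆ A + C := by
    intro x hx
    rw [Finset.mem_image] at hx
    obtain ⟨a, ha, rfl⟩ := hx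
    exact Finset.add_mem_add ha (C.min'_mem hC)
  have hW : C.image (a0 + ·) ⊆ A + C := by
    intro x hx
    rw [Finset.mem_image] at hx
    obtain ⟨c, hc, rfl⟩ := hx
    exact Finset.add_mem_add (A.max'_mem hA) hc
  have hUcard : (A.image (· + c0)).card = A.card :=
    Finset.card_image_of_injective _ (add_left_injective c0)
  have hWcard : (C.image (a0 + ·)).card = C.card :=
    Finset.card_image_of_injective _ (add_right_injective a0)
  have hinter : (A.image (· + c0)) ∩ (C.image (a0 + ·)) ⊆ {a0 + c0} := by
    intro x hx
    rw [Finset.mem_inter, Finset.mem_image, Finset.mem_image] at hx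
    obtain ⟨⟨a, ha, rfl⟩, ⟨c, hc, hce⟩⟩ := hx
    have h1 : a ≤ a0 := A.le_max' a ha
    have h2 : c0 ≤ c := C.min'_le c hc
    rw [Finset.mem_singleton]
    omega
  have hun := Finset.card_union_add_card_inter (A.image (· + c0)) (C.image (a0 + ·))
  have h1 : ((A.image (· + c0)) ∪ (C.image (a0 + ·))).card ≤ (A + C).card :=
    Finset.card_le_card (Finset.union_subset hU hW)
  have h2 : ((A.image (· + c0)) ∩ (C.image (a0 + ·))).card ≤ 1 :=
    le_trans (Finset.card_le_card hinter) (by simp)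
  omega

lemma small_of_adj {V : Type*} {G : SimpleGraph V} {f : V → Finset ℕ}
    (hf : IsWeakIASI G f) {u v : V} (h : G.Adj u v) :
    (f u).card = 1 ∨ (f v).card = 1 := by
  by_contra hc
  push_neg at hc
  have hu := Finset.card_pos.mpr (hf.nonempty u)
  have hv := Finset.card_pos.mpr (hf.nonempty v)
  have hw := hf.weak h
  have hlb := sumset_card_lb (hf.nonempty u) (hf.nonempty v)
  rw [hw] at hlb
  rcases hc with ⟨h1, h2⟩
  omega

-- independent sets in an odd cycle
lemma indep_card_le {k : ℕ} (hk : k % 2 = 0) (S : Finset (Fin (k+3)))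
    (hS : ∀ a ∈ S, ∀ b ∈ S, ¬ (cycleGraph (k+3)).Adj a b) : 2 * S.card ≤ k + 2 := by
  have hdisj : Disjoint S (S.image (· + 1)) := by
    rw [Finset.disjoint_left]
    intro x hx hx'
    rw [Finset.mem_image] at hx'
    obtain ⟨y, hy, rfl⟩ := hx'
    exact hS y hy (y + 1) hx (cycle_adj_iff.mpr (Or.inr rfl))
  have hcard : (S.image (· + 1)).card = S.card :=
    Finset.card_image_of_injective _ (add_left_injective 1)
  have hle : (S ∪ S.image (· + 1)).card ≤ k + 3 := by
    refine le_trans (Finset.card_le_univ _) ?_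
    simp
  rw [Finset.card_union_of_disjoint hdisj, hcard] at hle
  omega

section LowerBound
variable {k n : ℕ} {f : Fin (k+3) × Fin (n+1) → Finset ℕ}

def bigSet (f : Fin (k+3) × Fin (n+1) → Finset ℕ) (j : Fin (n+1)) : Finset (Fin (k+3)) :=
  Finset.univ.filter (fun i => ¬ (f (i, j)).card = 1)

lemma bigSet_bound (hk : k % 2 = 0)
    (hf : IsWeakIASI (cycleGraph (k+3) □ pathGraph (n+1)) f) (j : Fin (n+1)) :
    2 * (bigSet f j).card ≤ k + 2 := by
  refine indep_card_le hk _ ?_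
  intro a ha b hb hadj
  rw [bigSet, Finset.mem_filter] at ha hb
  have hadj' : (cycleGraph (k+3) □ pathGraph (n+1)).Adj (a, j) (b, j) := by
    rw [boxProd_adj]; exact Or.inl ⟨hadj, rfl⟩
  rcases small_of_adj hf hadj' with h | h
  · exact ha.2 h
  · exact hb.2 h

lemma layer_pair (hk : k % 2 = 0)
    (hf : IsWeakIASI (cycleGraph (k+3) □ pathGraph (n+1)) f) (j : Fin (n+1)) :
    ∃ i, (f (i, j)).card = 1 ∧ (f (i + 1, j)).card = 1 := by
  by_contra hno
  push_neg at hno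
  have hsmall : ∀ a ∈ Finset.univ.filter (fun i => (f (i, j)).card = 1),
      ∀ b ∈ Finset.univ.filter (fun i => (f (i, j)).card = 1),
      ¬ (cycleGraph (k+3)).Adj a b := by
    intro a ha b hb hadj
    rw [Finset.mem_filter] at ha hb
    rw [cycle_adj_iff] at hadj
    rcases hadj with rfl | rfl
    · exact hno b hb.2 ha.2
    · exact hno a ha.2 hb.2
  have h1 := indep_card_le hk _ hsmall
  have h2 := bigSet_bound hk hf j
  have hsub : (Finset.univ : Finset (Fin (k+3))) ⊆
      (Finset.univ.filter (fun i => (f (i, j)).card = 1)) ∪ bigSet f j := by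
    intro i _
    rw [Finset.mem_union, bigSet, Finset.mem_filter, Finset.mem_filter]
    by_cases h : (f (i, j)).card = 1
    · exact Or.inl ⟨Finset.mem_univ i, h⟩
    · exact Or.inr ⟨Finset.mem_univ i, h⟩
  have hc := Finset.card_le_card hsub
  have hc2 := Finset.card_union_le (Finset.univ.filter (fun i => (f (i, j)).card = 1))
    (bigSet f j)
  rw [Finset.card_univ] at hc
  simp only [Fintype.card_fin] at hc
  omega

lemma rank_pair (hk : k % 2 = 0)
    (hf : IsWeakIASI (cycleGraph (k+3) □ pathGraph (n+1)) f) (a b : Fin (n+1))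
    (hab : a.val + 1 = b.val) :
    ∃ i : Fin (k+3), (f (i, a)).card = 1 ∧ (f (i, b)).card = 1 := by
  by_contra hno
  push_neg at hno
  have hsub : (Finset.univ : Finset (Fin (k+3))) ⊆ bigSet f a ∪ bigSet f b := by
    intro i _
    rw [Finset.mem_union, bigSet, bigSet, Finset.mem_filter, Finset.mem_filter]
    by_cases h : (f (i, a)).card = 1
    · exact Or.inr ⟨Finset.mem_univ i, hno i h⟩
    · exact Or.inl ⟨Finset.mem_univ i, h⟩
  have hdisj : Disjoint (bigSet f a) (bigSet f b) := by
    rw [Finset.disjoint_left]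
    intro i hia hib
    rw [bigSet, Finset.mem_filter] at hia hib
    have hadj : (cycleGraph (k+3) □ pathGraph (n+1)).Adj (i, a) (i, b) := by
      rw [boxProd_adj]
      exact Or.inr ⟨pathGraph_adj.mpr (Or.inl hab), rfl⟩
    rcases small_of_adj hf hadj with h | h
    · exact hia.2 h
    · exact hib.2 h
  have h1 := bigSet_bound hk hf a
  have h2 := bigSet_bound hk hf b
  have hc := Finset.card_le_card hsub
  rw [Finset.card_union_of_disjoint hdisj, Finset.card_univ] at hc
  simp only [Fintype.card_fin] at hc
  omega

lemma lower_bound_odd (hk : k % 2 = 0)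
    (hf : IsWeakIASI (cycleGraph (k+3) □ pathGraph (n+1)) f) :
    2 * n + 1 ≤ monoEdgeCount (cycleGraph (k+3) □ pathGraph (n+1)) f := by
  simp only [monoEdgeCount]
  have hlayer : ∀ j : Fin (n+1), ∃ i, (f (i, j)).card = 1 ∧ (f (i + 1, j)).card = 1 :=
    layer_pair hk hf
  have hrank : ∀ j : Fin n, ∃ i, (f (i, j.castSucc)).card = 1 ∧ (f (i, j.succ)).card = 1 :=
    fun j => rank_pair hk hf j.castSucc j.succ (by rw [Fin.coe_castSucc, Fin.val_succ])
  have hF : ∀ x : Fin (n+1) ⊕ Fin n, ∃ e : Sym2 (Fin (k+3) × Fin (n+1)),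
      (e ∈ (cycleGraph (k+3) □ pathGraph (n+1)).edgeSet ∧ ∀ v ∈ e, (f v).card = 1) ∧
      Sym2.map Prod.snd e = shadowMap n x := by
    rintro (j | j)
    · obtain ⟨i, h1, h2⟩ := hlayer j
      refine ⟨s((i, j), (i + 1, j)), ⟨?_, ?_⟩, ?_⟩
      · rw [mem_edgeSet, boxProd_adj]
        exact Or.inl ⟨cycle_adj_iff.mpr (Or.inr rfl), rfl⟩
      · intro w hw
        rw [Sym2.mem_iff] at hw
        rcases hw with rfl | rfl
        · exact h1
        · exact h2
      · simp [shadowMap, Sym2.map_pair_eq]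
    · obtain ⟨i, h1, h2⟩ := hrank j
      refine ⟨s((i, j.castSucc), (i, j.succ)), ⟨?_, ?_⟩, ?_⟩
      · rw [mem_edgeSet, boxProd_adj]
        exact Or.inr ⟨pathGraph_adj.mpr (Or.inl (by rw [Fin.coe_castSucc, Fin.val_succ])), rfl⟩
      · intro w hw
        rw [Sym2.mem_iff] at hw
        rcases hw with rfl | rfl
        · exact h1
        · exact h2
      · simp [shadowMap, Sym2.map_pair_eq]
  choose F hFmem hFshadow using hF
  have hinj : Function.Injective F := by
    intro x y h
    apply shadow_inj
    rw [← hFshadow, ← hFshadow, h]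
  refine le_trans (by simp only [Fintype.card_sum, Fintype.card_fin]; omega)
    (le_card_of_inj _ (fun e => e ∈ (cycleGraph (k+3) □ pathGraph (n+1)).edgeSet ∧
      ∀ v ∈ e, (f v).card = 1) F
      (fun a => by simp only [Finset.mem_filter, mem_edgeFinset]) hinj hFmem)

end LowerBound


/-- For `m ≥ 3`, `n ≥ 1`, the sparing number of the prism `Cₘ □ Pₙ`
is `0` if `m` is even and `2n + 1` if `m` is odd. -/
theorem sparing_number_prism (m n : ℕ) (hm : 3 ≤ m) (hn : 1 ≤ n) :
    (Even m → IsLeast (monoCounts (cycleGraph m □ pathGraph (n + 1))) 0) ∧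
      (Odd m → IsLeast (monoCounts (cycleGraph m □ pathGraph (n + 1))) (2 * n + 1)) := by
  obtain ⟨k, hk⟩ := Nat.exists_eq_add_of_le hm
  have hm3 : m = k + 3 := by omega
  subst hm3
  constructor
  · intro he
    have hk0 : (k+3) % 2 = 0 := Nat.even_iff.mp he
    exact ⟨⟨lab (Beven k n), isWeakIASI_lab _ (even_hind hk0), monoEdgeCount_even_zero hk0⟩,
      fun x _ => Nat.zero_le x⟩
  · intro ho
    have hk0 : k % 2 = 0 := by
      have := Nat.odd_iff.mp ho
      omega
    refine ⟨⟨lab (Bodd k n), isWeakIASI_lab _ odd_hind, monoEdgeCount_odd hk0⟩, ?_⟩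
    rintro x ⟨f, hf, rfl⟩
    exact lower_bound_odd hk0 hf
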